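/- arXiv:2408.08264 — 2 statements merged into one kernel-verified Lean document; each statement's English description precedes it below -/
import Mathlib

section
/- Suppose the six pressure functions P_l, P_a, P_v, P_r, P_pa, P_pv and the two ventricular capacitance functions C_l, C_r are differentiable at a time t with C_l(t) ≠ 0 and C_r(t) ≠ 0, and that the CVSim-6 ODE system holds at t. Then the total stressed volume ΣV = V_l + V_a + V_v + V_r + V_pa + V_pv is differentiable at t with derivative zero; consequently, if the ODE system holds at every point of an interval, the total stressed volume is constant on that interval. -/
/-- **CVSim-6 conserves total stressed volume.**
If, at every point of an interval `s`, the pressure functions and the ventricular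
capacitance functions are differentiable with nonvanishing ventricular capacitances, and
the CVSim-6 ODE system holds, then the total stressed volume
`ΣV = V_l + V_a + V_v + V_r + V_pa + V_pv` has derivative zero at every point of `s`;
consequently it is constant on `s`. -/
theorem cvsim6_total_stressed_volume_conserved
    (Pth Ca Cv Cpa Cpv : ℝ)
    (Rlin Rlout Ra Rrin Rrout Rpv : ℝ)
    (hCa : 0 < Ca) (hCv : 0 < Cv) (hCpa : 0 < Cpa) (hCpv : 0 < Cpv)
    (hRlin : 0 < Rlin) (hRlout : 0 < Rlout) (hRa : 0 < Ra)
    (hRrin : 0 < Rrin) (hRrout : 0 < Rrout) (hRpv : 0 < Rpv)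
    (Vl0 Va0 Vv0 Vr0 Vpa0 Vpv0 : ℝ)
    (Pl Pa Pv Pr Ppa Ppv Cl Cr Cl' Cr' : ℝ → ℝ)
    (Qlin Qlout Qa Qrin Qrout Qpv : ℝ → ℝ)
    (hQlin : Qlin = fun t => if Ppv t > Pl t then (Ppv t - Pl t) / Rlin else 0)
    (hQlout : Qlout = fun t => if Pl t > Pa t then (Pl t - Pa t) / Rlout else 0)
    (hQa : Qa = fun t => (Pa t - Pv t) / Ra)
    (hQrin : Qrin = fun t => if Pv t > Pr t then (Pv t - Pr t) / Rrin else 0)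
    (hQrout : Qrout = fun t => if Pr t > Ppa t then (Pr t - Ppa t) / Rrout else 0)
    (hQpv : Qpv = fun t => (Ppa t - Ppv t) / Rpv)
    (V : ℝ → ℝ)
    (hVdef : V = fun t =>
      (Vl0 + (Pl t - Pth) * Cl t) + (Va0 + (Pa t - Pth / 3) * Ca) +
      (Vv0 + Pv t * Cv) + (Vr0 + (Pr t - Pth) * Cr t) +
      (Vpa0 + (Ppa t - Pth) * Cpa) + (Vpv0 + (Ppv t - Pth) * Cpv))
    (s : Set ℝ) (hs : s.OrdConnected)
    (hCl : ∀ t ∈ s, HasDerivAt Cl (Cl' t) t)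
    (hCr : ∀ t ∈ s, HasDerivAt Cr (Cr' t) t)
    (hClne : ∀ t ∈ s, Cl t ≠ 0) (hCrne : ∀ t ∈ s, Cr t ≠ 0)
    (hPl : ∀ t ∈ s, HasDerivAt Pl ((Qlin t - Qlout t - (Pl t - Pth) * Cl' t) / Cl t) t)
    (hPa : ∀ t ∈ s, HasDerivAt Pa ((Qlout t - Qa t) / Ca) t)
    (hPv : ∀ t ∈ s, HasDerivAt Pv ((Qa t - Qrin t) / Cv) t)
    (hPr : ∀ t ∈ s, HasDerivAt Pr ((Qrin t - Qrout t - (Pr t - Pth) * Cr' t) / Cr t) t)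
    (hPpa : ∀ t ∈ s, HasDerivAt Ppa ((Qrout t - Qpv t) / Cpa) t)
    (hPpv : ∀ t ∈ s, HasDerivAt Ppv ((Qpv t - Qlin t) / Cpv) t) :
    (∀ t ∈ s, HasDerivAt V 0 t) ∧ (∀ x ∈ s, ∀ y ∈ s, V x = V y) := by
  have key : ∀ t ∈ s, HasDerivAt V 0 t := by
    intro t ht
    have h1 := (((hPl t ht).sub_const Pth).mul (hCl t ht))
    have h2 := ((hPa t ht).sub_const (Pth/3)).mul_const Ca
    have h3 := (hPv t ht).mul_const Cv
    have h4 := (((hPr t ht).sub_const Pth).mul (hCr t ht))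
    have h5 := ((hPpa t ht).sub_const Pth).mul_const Cpa
    have h6 := ((hPpv t ht).sub_const Pth).mul_const Cpv
    have H := ((((((h1.const_add Vl0).add (h2.const_add Va0)).add
      (h3.const_add Vv0)).add (h4.const_add Vr0)).add
      (h5.const_add Vpa0)).add (h6.const_add Vpv0))
    rw [hVdef]
    refine H.congr_deriv ?_
    simp only [div_mul_cancel₀ _ (hClne t ht), div_mul_cancel₀ _ (hCrne t ht), div_mul_cancel₀ _ hCa.ne', div_mul_cancel₀ _ hCv.ne', div_mul_cancel₀ _ hCpa.ne', div_mul_cancel₀ _ hCpv.ne']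
    ring
  refine ⟨key, ?_⟩
  intro x hx y hy
  have hconv : Convex ℝ s := hs.convex
  have := hconv.norm_image_sub_le_of_norm_hasFDerivWithin_le
    (f := V) (f' := fun _ => ContinuousLinearMap.smulRight (1 : ℝ →L[ℝ] ℝ) 0) (C := 0)
    (fun z hz => (key z hz).hasFDerivAt.hasFDerivWithinAt)
    (fun z hz => by simp) hy hx
  simpa [← dist_eq_norm, dist_le_zero] using this
end

section
/- All eigenvalues of the CVSim-6 coefficient matrix A are real: for any positive capacitances C_l, C_a, C_v, C_r, C_pa, C_pv, positive resistances R_{l,in}, R_{l,out}, R_a, R_{r,in}, R_{r,out}, R_pv, any real Ċ_l, Ċ_r, and any valve indicators χ_mi, χ_ao, χ_tr, χ_pu ∈ {0,1}, every complex eigenvalue of A = C⁻¹(−L + D) is real. (Indeed, A is conjugate via the positive diagonal matrix C^{1/2} to the symmetric matrix C^{−1/2}(−L + D)C^{−1/2}.) -/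
/-- **All eigenvalues of the CVSim-6 coefficient matrix are real.**
For positive capacitances and resistances, arbitrary real `Ċ_l, Ċ_r`, and valve
indicators in `{0,1}`, every complex eigenvalue of `A = C⁻¹(−L + D)` is real.
(Components are ordered `l = 0, a = 1, v = 2, r = 3, pa = 4, pv = 5`.) -/
theorem cvsim6_eigenvalues_real
    (Cl Ca Cv Cr Cpa Cpv : ℝ)
    (hCl : 0 < Cl) (hCa : 0 < Ca) (hCv : 0 < Cv)
    (hCr : 0 < Cr) (hCpa : 0 < Cpa) (hCpv : 0 < Cpv)
    (Rlin Rlout Ra Rrin Rrout Rpv : ℝ)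
    (hRlin : 0 < Rlin) (hRlout : 0 < Rlout) (hRa : 0 < Ra)
    (hRrin : 0 < Rrin) (hRrout : 0 < Rrout) (hRpv : 0 < Rpv)
    (Cdl Cdr : ℝ)
    (χmi χao χtr χpu : ℝ)
    (hχmi : χmi = 0 ∨ χmi = 1) (hχao : χao = 0 ∨ χao = 1)
    (hχtr : χtr = 0 ∨ χtr = 1) (hχpu : χpu = 0 ∨ χpu = 1)
    (C L D A : Matrix (Fin 6) (Fin 6) ℝ)
    (hC : C = Matrix.diagonal ![Cl, Ca, Cv, Cr, Cpa, Cpv])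
    (hL : L = !![χao / Rlout + χmi / Rlin, -(χao / Rlout), 0, 0, 0, -(χmi / Rlin);
                 -(χao / Rlout), χao / Rlout + 1 / Ra, -(1 / Ra), 0, 0, 0;
                 0, -(1 / Ra), 1 / Ra + χtr / Rrin, -(χtr / Rrin), 0, 0;
                 0, 0, -(χtr / Rrin), χtr / Rrin + χpu / Rrout, -(χpu / Rrout), 0;
                 0, 0, 0, -(χpu / Rrout), χpu / Rrout + 1 / Rpv, -(1 / Rpv);
                 -(χmi / Rlin), 0, 0, 0, -(1 / Rpv), 1 / Rpv + χmi / Rlin])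
    (hD : D = Matrix.diagonal ![-Cdl, 0, 0, -Cdr, 0, 0])
    (hA : A = C⁻¹ * (-L + D)) :
    ∀ μ : ℂ, μ ∈ spectrum ℂ (A.map Complex.ofReal) → μ.im = 0 := by
  intro μ hμ
  classical
  -- the vector of capacitances and its square roots
  set c : Fin 6 → ℝ := ![Cl, Ca, Cv, Cr, Cpa, Cpv] with hc
  have hcpos : ∀ i, 0 < c i := by
    intro i; fin_cases i <;> simpa [hc]
  set s : Fin 6 → ℂ := fun i => (Real.sqrt (c i) : ℂ) with hs
  have hs0 : ∀ i, s i ≠ 0 := by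
    intro i
    simp [hs, Complex.ofReal_ne_zero, Real.sqrt_ne_zero', hcpos i]
  set S : Matrix (Fin 6) (Fin 6) ℂ := Matrix.diagonal s with hSdef
  set Cc : Matrix (Fin 6) (Fin 6) ℂ := Matrix.diagonal (fun i => (c i : ℂ)) with hCc
  set Mc : Matrix (Fin 6) (Fin 6) ℂ := (-L + D).map Complex.ofReal with hMc
  -- S * S = Cc
  have key : ∀ i, s i * s i = (c i : ℂ) := by
    intro i
    rw [hs, ← Complex.ofReal_mul, Real.mul_self_sqrt (hcpos i).le]
  have hSS : S * S = Cc := by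
    rw [hSdef, Matrix.diagonal_mul_diagonal, hCc]
    refine congrArg Matrix.diagonal (funext fun i => ?_)
    exact key i
  -- S is invertible
  have hSdet : IsUnit S.det := by
    rw [hSdef, Matrix.det_diagonal]
    exact (Finset.prod_ne_zero_iff.2 fun i _ => hs0 i).isUnit
  have hSinv : S * S⁻¹ = 1 := Matrix.mul_nonsing_inv S hSdet
  have hSinv' : S⁻¹ * S = 1 := Matrix.nonsing_inv_mul S hSdet
  -- the complexification of A
  have hCdet : IsUnit C.det := by
    rw [hC, Matrix.det_diagonal]
    exact (Finset.prod_ne_zero_iff.2 fun i _ => (hcpos i).ne').isUnit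
  have hCAM : C * A = -L + D := by
    rw [hA, ← mul_assoc, Matrix.mul_nonsing_inv C hCdet, one_mul]
  have hCmap : C.map Complex.ofReal = Cc := by
    rw [hC, hCc, Matrix.diagonal_map (by simp)]
  have hCcAc : Cc * A.map Complex.ofReal = Mc := by
    have h1 : (C * A).map (Complex.ofRealHom : ℝ →+* ℂ) =
        C.map (Complex.ofRealHom : ℝ →+* ℂ) * A.map (Complex.ofRealHom : ℝ →+* ℂ) :=
      Matrix.map_mul
    rw [hMc, ← hCAM]
    calc Cc * A.map Complex.ofReal
        = C.map Complex.ofReal * A.map Complex.ofReal := by rw [hCmap]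
      _ = (C * A).map Complex.ofReal := h1.symm
  -- the symmetrized matrix
  have hB : S * A.map Complex.ofReal * S⁻¹ = S⁻¹ * Mc * S⁻¹ := by
    rw [← hCcAc, ← hSS]
    simp only [← mul_assoc]
    rw [hSinv', one_mul]
  -- L is symmetric
  have hLsymm : Matrix.transpose L = L := by
    subst hL
    ext i j
    fin_cases i <;> fin_cases j <;> rfl
  -- (-L + D) is symmetric
  have hMsymm : Matrix.transpose (-L + D) = -L + D := by
    rw [Matrix.transpose_add, Matrix.transpose_neg, hLsymm, hD,
      Matrix.diagonal_transpose]
  -- Mc is Hermitian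
  have hMcH : Mc.IsHermitian := by
    show Matrix.conjTranspose Mc = Mc
    rw [hMc]
    ext i j
    have hij := congrFun (congrFun hMsymm i) j
    rw [Matrix.transpose_apply] at hij
    simp [Matrix.conjTranspose_apply, Matrix.map_apply, hij, Complex.conj_ofReal]
  -- S is Hermitian, and so is S⁻¹
  have hSH : Matrix.conjTranspose S = S := by
    rw [hSdef, Matrix.diagonal_conjTranspose]
    refine congrArg Matrix.diagonal (funext fun i => ?_)
    show star (s i) = s i
    simp [hs, Complex.conj_ofReal]
  have hSinvH : Matrix.conjTranspose S⁻¹ = S⁻¹ := by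
    rw [Matrix.conjTranspose_nonsing_inv, hSH]
  -- hence S⁻¹ * Mc * S⁻¹ is Hermitian
  have hBH : (S⁻¹ * Mc * S⁻¹).IsHermitian := by
    show Matrix.conjTranspose _ = _
    rw [Matrix.conjTranspose_mul, Matrix.conjTranspose_mul,
      hSinvH, hMcH.eq, mul_assoc]
  -- transfer μ into the spectrum of the Hermitian matrix
  obtain ⟨u, hu⟩ := (Matrix.isUnit_iff_isUnit_det S).2 hSdet
  have hmem : μ ∈ spectrum ℂ (S⁻¹ * Mc * S⁻¹) := by
    rw [← hB]
    have hcu : (↑u⁻¹ : Matrix (Fin 6) (Fin 6) ℂ) = S⁻¹ := by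
      rw [Matrix.coe_units_inv, hu]
    rw [← hcu, ← hu, spectrum.units_conjugate]
    exact hμ
  -- Hermitian matrices have real spectrum
  have hmem' : μ ∈ spectrum ℂ (Matrix.toEuclideanLin (S⁻¹ * Mc * S⁻¹)) := by
    rwa [Matrix.spectrum_toEuclideanLin]
  have hev : Module.End.HasEigenvalue (Matrix.toEuclideanLin (S⁻¹ * Mc * S⁻¹)) μ :=
    Module.End.hasEigenvalue_iff_mem_spectrum.2 hmem'
  have hsym := Matrix.isHermitian_iff_isSymmetric.1 hBH
  have := hsym.conj_eigenvalue_eq_self hev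
  rwa [Complex.conj_eq_iff_im] at this
end
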